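/- For every m ≥ 0 and 1-forms ξ, η on an n-dimensional inner product space, the trace of ι(η)ε(ξ) acting on Λᵐ V* equals A_{n,m}⟨ξ,η⟩, where A_{n,m} = C(n,m) − C(n,m−1) + ⋯ + (−1)ᵐ C(n,0) is the alternating sum of binomial coefficients. -/

import Mathlib

noncomputable section

open ExteriorAlgebra
open scoped RealInnerProductSpace

abbrev Vn (n : ℕ) := EuclideanSpace ℝ (Fin n)

variable {n : ℕ}

def eps (ξ : Vn n) : ExteriorAlgebra ℝ (Vn n) →ₗ[ℝ] ExteriorAlgebra ℝ (Vn n) :=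
  LinearMap.mulLeft ℝ (ExteriorAlgebra.ι ℝ ξ)

def iot (ξ : Vn n) : ExteriorAlgebra ℝ (Vn n) →ₗ[ℝ] ExteriorAlgebra ℝ (Vn n) :=
  CliffordAlgebra.contractLeft (Q := (0 : QuadraticForm ℝ (Vn n)))
    (innerSL ℝ ξ).toLinearMap

lemma eps_mem (ξ : Vn n) (m : ℕ) :
    ∀ x ∈ ⋀[ℝ]^m (Vn n), eps ξ x ∈ ⋀[ℝ]^(m+1) (Vn n) := by
  intro x hx
  rw [exteriorPower, pow_succ']
  exact Submodule.mul_mem_mul ⟨ξ, rfl⟩ hx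

lemma iot_zero_mem (ξ : Vn n) :
    ∀ x ∈ ⋀[ℝ]^0 (Vn n), iot ξ x = 0 := by
  intro x hx
  rw [exteriorPower, pow_zero, Submodule.one_eq_range] at hx
  obtain ⟨r, rfl⟩ := hx
  exact CliffordAlgebra.contractLeft_algebraMap
    (Q := (0 : QuadraticForm ℝ (Vn n))) (innerSL ℝ ξ).toLinearMap r

lemma iot_mem (ξ : Vn n) (m : ℕ) :
    ∀ x ∈ ⋀[ℝ]^(m+1) (Vn n), iot ξ x ∈ ⋀[ℝ]^m (Vn n) := by
  induction m with
  | zero =>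
    intro x hx
    rw [exteriorPower, pow_one] at hx
    obtain ⟨v, rfl⟩ := hx
    rw [iot, CliffordAlgebra.contractLeft_ι]
    exact Submodule.algebraMap_mem _
  | succ k ih =>
    intro x hx
    rw [exteriorPower, pow_succ'] at hx
    refine Submodule.mul_induction_on hx ?_ ?_
    · rintro a ⟨v, rfl⟩ b hb
      rw [iot, CliffordAlgebra.contractLeft_ι_mul]
      refine sub_mem (Submodule.smul_mem _ _ hb) ?_
      rw [exteriorPower, pow_succ']
      exact Submodule.mul_mem_mul ⟨v, rfl⟩ (ih b hb)
    · intro x y hx hy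
      rw [map_add]
      exact add_mem hx hy

/-- `S(ξ) = ε(ξ)ι(ξ) − ι(ξ)ε(ξ)`. -/
def SOp (ξ : Vn n) : ExteriorAlgebra ℝ (Vn n) →ₗ[ℝ] ExteriorAlgebra ℝ (Vn n) :=
  eps ξ ∘ₗ iot ξ - iot ξ ∘ₗ eps ξ

lemma SOp_mem (ξ : Vn n) (m : ℕ) :
    ∀ x ∈ ⋀[ℝ]^m (Vn n), SOp ξ x ∈ ⋀[ℝ]^m (Vn n) := by
  intro x hx
  have h2 : iot ξ (eps ξ x) ∈ ⋀[ℝ]^m (Vn n) := iot_mem ξ m _ (eps_mem ξ m x hx)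
  have h1 : eps ξ (iot ξ x) ∈ ⋀[ℝ]^m (Vn n) := by
    match m with
    | 0 => rw [iot_zero_mem ξ x hx, map_zero]; exact Submodule.zero_mem _
    | k+1 => exact eps_mem ξ k _ (iot_mem ξ k x hx)
  simpa [SOp, LinearMap.sub_apply, LinearMap.comp_apply] using sub_mem h1 h2

/-- `S(ξ)` restricted to `m`-forms. -/
def SRes (ξ : Vn n) (m : ℕ) : ⋀[ℝ]^m (Vn n) →ₗ[ℝ] ⋀[ℝ]^m (Vn n) :=
  (SOp ξ).restrict (SOp_mem ξ m)

/-- The leading symbol `σ(ξ) = |ξ|⁻²(ε(ξ)ι(ξ) − ι(ξ)ε(ξ))`. -/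
def sigmaOp (ξ : Vn n) : ExteriorAlgebra ℝ (Vn n) →ₗ[ℝ] ExteriorAlgebra ℝ (Vn n) :=
  (‖ξ‖ ^ 2)⁻¹ • SOp ξ

lemma sigmaOp_mem (ξ : Vn n) (m : ℕ) :
    ∀ x ∈ ⋀[ℝ]^m (Vn n), sigmaOp ξ x ∈ ⋀[ℝ]^m (Vn n) := by
  intro x hx
  simpa [sigmaOp] using Submodule.smul_mem _ _ (SOp_mem ξ m x hx)

/-- `σ(ξ)` restricted to `m`-forms. -/
def sigmaR (ξ : Vn n) (m : ℕ) : ⋀[ℝ]^m (Vn n) →ₗ[ℝ] ⋀[ℝ]^m (Vn n) :=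
  (sigmaOp ξ).restrict (sigmaOp_mem ξ m)

/-- `ε(ξ₁)ι(ξ₂)ε(η₁)ι(η₂)`. -/
def quad (ξ₁ ξ₂ η₁ η₂ : Vn n) : ExteriorAlgebra ℝ (Vn n) →ₗ[ℝ] ExteriorAlgebra ℝ (Vn n) :=
  eps ξ₁ ∘ₗ iot ξ₂ ∘ₗ eps η₁ ∘ₗ iot η₂

lemma quad_mem (ξ₁ ξ₂ η₁ η₂ : Vn n) (m : ℕ) :
    ∀ x ∈ ⋀[ℝ]^m (Vn n), quad ξ₁ ξ₂ η₁ η₂ x ∈ ⋀[ℝ]^m (Vn n) := by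
  intro x hx
  have hq : quad ξ₁ ξ₂ η₁ η₂ x = eps ξ₁ (iot ξ₂ (eps η₁ (iot η₂ x))) := rfl
  match m with
  | 0 =>
    rw [hq, iot_zero_mem η₂ x hx]
    simp only [map_zero]
    exact Submodule.zero_mem _
  | k+1 =>
    rw [hq]
    exact eps_mem _ k _ (iot_mem _ k _ (eps_mem _ k _ (iot_mem _ k x hx)))

/-- `ε(ξ₁)ι(ξ₂)ε(η₁)ι(η₂)` restricted to `m`-forms. -/
def quadR (ξ₁ ξ₂ η₁ η₂ : Vn n) (m : ℕ) : ⋀[ℝ]^m (Vn n) →ₗ[ℝ] ⋀[ℝ]^m (Vn n) :=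
  (quad ξ₁ ξ₂ η₁ η₂).restrict (quad_mem ξ₁ ξ₂ η₁ η₂ m)


/-- `ε(ξ)` as a map from `m`-forms to `(m+1)`-forms. -/
noncomputable def epsR {n : ℕ} (ξ : Vn n) (m : ℕ) : ⋀[ℝ]^m (Vn n) →ₗ[ℝ] ⋀[ℝ]^(m+1) (Vn n) :=
  (eps ξ).restrict (eps_mem ξ m)

/-- `ι(ξ)` as a map from `(m+1)`-forms to `m`-forms. -/
noncomputable def iotR {n : ℕ} (ξ : Vn n) (m : ℕ) : ⋀[ℝ]^(m+1) (Vn n) →ₗ[ℝ] ⋀[ℝ]^m (Vn n) :=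
  (iot ξ).restrict (iot_mem ξ m)

def bb {n : ℕ} (i : Fin n) : Vn n := EuclideanSpace.basisFun (Fin n) ℝ i

lemma inner_bb (i j : Fin n) : ⟪bb i, bb j⟫ = if i = j then 1 else 0 :=
  orthonormal_iff_ite.mp (EuclideanSpace.basisFun (Fin n) ℝ).orthonormal i j

def eL (l : List (Fin n)) : ExteriorAlgebra ℝ (Vn n) :=
  (l.map fun i => ExteriorAlgebra.ι ℝ (bb i)).prod

lemma eL_nil : eL ([] : List (Fin n)) = 1 := rfl

lemma eL_cons (a : Fin n) (l : List (Fin n)) :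
    eL (a :: l) = ExteriorAlgebra.ι ℝ (bb a) * eL l := by
  simp [eL]

def eW (s : Finset (Fin n)) : ExteriorAlgebra ℝ (Vn n) := eL (s.sort (· ≤ ·))

lemma eL_mem (l : List (Fin n)) : eL l ∈ ⋀[ℝ]^(l.length) (Vn n) := by
  induction l with
  | nil => rw [eL_nil, List.length_nil, exteriorPower, pow_zero]; exact Submodule.one_le.mp le_rfl
  | cons a t ih =>
    rw [eL_cons, List.length_cons, exteriorPower, pow_succ']
    exact Submodule.mul_mem_mul ⟨bb a, rfl⟩ ih

lemma eW_mem (s : Finset (Fin n)) : eW s ∈ ⋀[ℝ]^(s.card) (Vn n) := by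
  have := eL_mem (s.sort (· ≤ ·))
  rwa [Finset.length_sort] at this

lemma ι_mul_eW {a : Fin n} {s : Finset (Fin n)} (h : ∀ x ∈ s, a < x) :
    ExteriorAlgebra.ι ℝ (bb a) * eW s = eW (insert a s) := by
  have ha : a ∉ s := fun hm => lt_irrefl a (h a hm)
  rw [eW, eW, Finset.sort_insert (· ≤ ·) (fun b hb => (h b hb).le) ha, eL_cons]

lemma eL_eq_eW {l : List (Fin n)} (h : l.Pairwise (· < ·)) : eL l = eW l.toFinset := by
  rw [eW]
  congr 1
  refine (List.Perm.eq_of_pairwise' (Finset.pairwise_sort _ _) (h.imp le_of_lt) ?_).symm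
  rw [← Multiset.coe_eq_coe, Finset.sort_eq, List.toFinset_val,
    List.dedup_eq_self.mpr h.nodup]

lemma iot_ι_mul (ξ v : Vn n) (x : ExteriorAlgebra ℝ (Vn n)) :
    iot ξ (ExteriorAlgebra.ι ℝ v * x) = ⟪ξ, v⟫ • x - ExteriorAlgebra.ι ℝ v * iot ξ x := by
  rw [iot, CliffordAlgebra.contractLeft_ι_mul]
  rfl

lemma iot_one (ξ : Vn n) : iot ξ (1 : ExteriorAlgebra ℝ (Vn n)) = 0 :=
  CliffordAlgebra.contractLeft_one (Q := (0 : QuadraticForm ℝ (Vn n))) _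

lemma iot_eL_not_mem {l : List (Fin n)} {a : Fin n} (h : a ∉ l) :
    iot (bb a) (eL l) = 0 := by
  induction l with
  | nil => rw [eL_nil, iot_one]
  | cons j t ih =>
    have haj : a ≠ j := fun e => h (e ▸ List.mem_cons_self (a := j) (l := t))
    have hat : a ∉ t := fun e => h (List.mem_cons_of_mem j e)
    rw [eL_cons, iot_ι_mul, inner_bb, if_neg haj, zero_smul, ih hat, mul_zero, zero_sub, neg_zero]

lemma iot_eL_mem {l : List (Fin n)} (hl : l.Nodup) {a : Fin n} (h : a ∈ l) :
    ∃ c : ℝ, (c = 1 ∨ c = -1) ∧ iot (bb a) (eL l) = c • eL (l.erase a) := by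
  induction l with
  | nil => exact absurd h List.not_mem_nil
  | cons j t ih =>
    rcases eq_or_ne a j with rfl | haj
    · refine ⟨1, Or.inl rfl, ?_⟩
      have hat : a ∉ t := (List.nodup_cons.mp hl).1
      rw [eL_cons, iot_ι_mul, inner_bb, if_pos rfl, one_smul, iot_eL_not_mem hat,
        mul_zero, sub_zero, List.erase_cons_head, one_smul]
    · have hat : a ∈ t := (List.mem_cons.mp h).resolve_left haj
      obtain ⟨c, hc, heq⟩ := ih (List.nodup_cons.mp hl).2 hat
      refine ⟨-c, by rcases hc with rfl | rfl; exacts [Or.inr rfl, Or.inl (by norm_num)], ?_⟩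
      rw [eL_cons, iot_ι_mul, inner_bb, if_neg haj, zero_smul, zero_sub, heq,
        List.erase_cons_tail, eL_cons, mul_smul_comm, neg_smul]
      simp [haj.symm]

lemma iot_eW_not_mem {s : Finset (Fin n)} {a : Fin n} (h : a ∉ s) :
    iot (bb a) (eW s) = 0 :=
  iot_eL_not_mem (by simpa using h)

lemma erase_sort (s : Finset (Fin n)) (a : Fin n) :
    eL ((s.sort (· ≤ ·)).erase a) = eW (s.erase a) := by
  have hs : ((s.sort (· ≤ ·)).erase a).Pairwise (· < ·) :=
    (Finset.sortedLT_sort s).pairwise.sublist (List.erase_sublist (a := a))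
  rw [eL_eq_eW hs]
  congr 1
  ext x
  rw [List.mem_toFinset, (Finset.sort_nodup s _).mem_erase_iff, Finset.mem_erase,
    Finset.mem_sort]

lemma iot_eW_of_mem {s : Finset (Fin n)} {a : Fin n} (h : a ∈ s) :
    ∃ c : ℝ, (c = 1 ∨ c = -1) ∧ iot (bb a) (eW s) = c • eW (s.erase a) := by
  obtain ⟨c, hc, heq⟩ := iot_eL_mem (Finset.sort_nodup s _) ((Finset.mem_sort (α := Fin n) (· ≤ ·)).mpr h)
  exact ⟨c, hc, by rw [eW, heq, erase_sort]⟩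

lemma eW_empty : eW (∅ : Finset (Fin n)) = 1 := by simp [eW, eL]

lemma ι_mul_eW_mem_span (s : Finset (Fin n)) (a : Fin n) :
    ExteriorAlgebra.ι ℝ (bb a) * eW s ∈
      Submodule.span ℝ (eW '' {t : Finset (Fin n) | t.card = s.card + 1 ∧ t ⊆ insert a s}) := by
  induction s using Finset.strongInduction generalizing a with
  | _ s ihs =>
  rcases s.eq_empty_or_nonempty with rfl | hne
  · rw [ι_mul_eW (fun x hx => absurd hx (Finset.notMem_empty x))]
    exact Submodule.subset_span ⟨{a}, ⟨by simp, by simp⟩, rfl⟩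
  · set h := s.min' hne with hh
    have hmem : h ∈ s := s.min'_mem hne
    have hlt : ∀ x ∈ s.erase h, h < x := fun x hx =>
      lt_of_le_of_ne (s.min'_le x (Finset.mem_of_mem_erase hx))
        (Ne.symm (Finset.ne_of_mem_erase hx))
    have hsplit : eW s = ExteriorAlgebra.ι ℝ (bb h) * eW (s.erase h) := by
      rw [ι_mul_eW hlt, Finset.insert_erase hmem]
    rcases lt_trichotomy a h with hah | rfl | hha
    · have : ∀ x ∈ s, a < x := fun x hx => lt_of_lt_of_le hah (s.min'_le x hx)
      rw [ι_mul_eW this]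
      have ha : a ∉ s := fun hm => lt_irrefl a (this a hm)
      exact Submodule.subset_span ⟨insert a s, ⟨Finset.card_insert_of_notMem ha,
        le_rfl⟩, rfl⟩
    · rw [hsplit, ← mul_assoc, ExteriorAlgebra.ι_sq_zero, zero_mul]
      exact Submodule.zero_mem _
    · have hsw : ExteriorAlgebra.ι ℝ (bb a) * ExteriorAlgebra.ι ℝ (bb h)
          = -(ExteriorAlgebra.ι ℝ (bb h) * ExteriorAlgebra.ι ℝ (bb a)) :=
        eq_neg_of_add_eq_zero_left (by rw [add_comm]; exact ExteriorAlgebra.ι_add_mul_swap _ _)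
      have key : ExteriorAlgebra.ι ℝ (bb a) * eW s
          = -(LinearMap.mulLeft ℝ (ExteriorAlgebra.ι ℝ (bb h))
              (ExteriorAlgebra.ι ℝ (bb a) * eW (s.erase h))) := by
        rw [hsplit, ← mul_assoc, hsw, neg_mul, mul_assoc, LinearMap.mulLeft_apply]
      rw [key]
      refine Submodule.neg_mem _ ?_
      have IH := ihs (s.erase h) (Finset.erase_ssubset hmem) a
      have hmap : (Submodule.span ℝ (eW '' {t : Finset (Fin n) |
            t.card = (s.erase h).card + 1 ∧ t ⊆ insert a (s.erase h)})).map
            (LinearMap.mulLeft ℝ (ExteriorAlgebra.ι ℝ (bb h)))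
          ≤ Submodule.span ℝ (eW '' {t : Finset (Fin n) | t.card = s.card + 1 ∧ t ⊆ insert a s}) := by
        rw [Submodule.map_span, Submodule.span_le]
        rintro _ ⟨_, ⟨t, ⟨ht1, ht2⟩, rfl⟩, rfl⟩
        have hht : ∀ x ∈ t, h < x := by
          intro x hx
          rcases Finset.mem_insert.mp (ht2 hx) with rfl | hx'
          · exact hha
          · exact hlt x hx'
        have hhnt : h ∉ t := fun hm => lt_irrefl h (hht h hm)
        refine Submodule.subset_span ⟨insert h t, ⟨?_, ?_⟩, ?_⟩
        · rw [Finset.card_insert_of_notMem hhnt, ht1,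
            Finset.card_erase_of_mem hmem]
          have : 1 ≤ s.card := Finset.card_pos.mpr hne
          omega
        · intro x hx
          rcases Finset.mem_insert.mp hx with rfl | hx'
          · exact Finset.mem_insert_of_mem hmem
          · rcases Finset.mem_insert.mp (ht2 hx') with rfl | hx''
            · exact Finset.mem_insert_self _ _
            · exact Finset.mem_insert_of_mem (Finset.mem_of_mem_erase hx'')
        · rw [LinearMap.mulLeft_apply, ι_mul_eW hht]
      exact hmap ⟨_, IH, rfl⟩

lemma mul_span_le (i : Fin n) (k : ℕ) :
    (Submodule.span ℝ (eW '' {t : Finset (Fin n) | t.card = k})).map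
        (LinearMap.mulLeft ℝ (ExteriorAlgebra.ι ℝ (bb i)))
      ≤ Submodule.span ℝ (eW '' {t : Finset (Fin n) | t.card = k + 1}) := by
  rw [Submodule.map_span, Submodule.span_le]
  rintro _ ⟨_, ⟨t, ht, rfl⟩, rfl⟩
  have ht' : t.card = k := ht
  have h1 := ι_mul_eW_mem_span t i
  refine Submodule.span_mono (Set.image_mono ?_) h1
  rintro u ⟨hu1, _⟩
  show u.card = k + 1
  omega

lemma exteriorPower_le_span (m : ℕ) :
    ⋀[ℝ]^m (Vn n) ≤ Submodule.span ℝ (eW '' {t : Finset (Fin n) | t.card = m}) := by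
  induction m with
  | zero =>
    intro x hx
    rw [exteriorPower, pow_zero, Submodule.one_eq_range] at hx
    obtain ⟨r, rfl⟩ := hx
    rw [Algebra.linearMap_apply, Algebra.algebraMap_eq_smul_one, ← eW_empty]
    exact Submodule.smul_mem _ _ (Submodule.subset_span ⟨∅, by simp, rfl⟩)
  | succ k ih =>
    rw [exteriorPower, pow_succ']
    refine Submodule.mul_le.mpr ?_
    rintro _ ⟨v, rfl⟩ b hb
    have hv : v = ∑ i, v i • bb i := by
      have := (EuclideanSpace.basisFun (Fin n) ℝ).sum_repr v
      simp only [EuclideanSpace.basisFun_repr] at this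
      exact this.symm
    have expand : ExteriorAlgebra.ι ℝ v * b = ∑ i, v i • (ExteriorAlgebra.ι ℝ (bb i) * b) := by
      conv_lhs => rw [hv]
      rw [map_sum, Finset.sum_mul]
      simp only [map_smul, smul_mul_assoc]
    rw [expand]
    refine Submodule.sum_mem _ fun i _ => Submodule.smul_mem _ _ ?_
    exact mul_span_le i k ⟨b, ih hb, rfl⟩

def Gl : List (Fin n) → (ExteriorAlgebra ℝ (Vn n) →ₗ[ℝ] ExteriorAlgebra ℝ (Vn n))
  | [] => LinearMap.id
  | i :: l => Gl l ∘ₗ iot (bb i)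

def GW (t : Finset (Fin n)) : ExteriorAlgebra ℝ (Vn n) →ₗ[ℝ] ExteriorAlgebra ℝ (Vn n) :=
  Gl (t.sort (· ≤ ·))

lemma GW_eW {t : Finset (Fin n)} : ∀ {s : Finset (Fin n)}, t.card = s.card →
    (t = s → ∃ c : ℝ, (c = 1 ∨ c = -1) ∧ GW t (eW s) = c • 1) ∧
    (t ≠ s → GW t (eW s) = 0) := by
  induction t using Finset.strongInduction with
  | _ t iht =>
  intro s hcard
  rcases t.eq_empty_or_nonempty with rfl | hne
  · have hs : s = ∅ := Finset.card_eq_zero.mp hcard.symm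
    subst hs
    constructor
    · intro _
      exact ⟨1, Or.inl rfl, by simp [GW, Gl, eW_empty]⟩
    · intro hne
      exact absurd rfl hne
  · set i := t.min' hne with hi
    have himem : i ∈ t := t.min'_mem hne
    have hlt : ∀ x ∈ t.erase i, i < x := fun x hx =>
      lt_of_le_of_ne (t.min'_le x (Finset.mem_of_mem_erase hx))
        (Ne.symm (Finset.ne_of_mem_erase hx))
    have hsort : t.sort (· ≤ ·) = i :: (t.erase i).sort (· ≤ ·) := by
      conv_lhs => rw [← Finset.insert_erase himem]
      exact Finset.sort_insert (· ≤ ·) (fun b hb => (hlt b hb).le)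
        (Finset.notMem_erase i t)
    have hGW : ∀ x, GW t x = GW (t.erase i) (iot (bb i) x) := by
      intro x
      rw [GW, hsort]
      rfl
    by_cases his : i ∈ s
    · obtain ⟨c, hc, heq⟩ := iot_eW_of_mem his
      have hcard' : (t.erase i).card = (s.erase i).card := by
        rw [Finset.card_erase_of_mem himem, Finset.card_erase_of_mem his, hcard]
      have IH := iht (t.erase i) (Finset.erase_ssubset himem) hcard'
      constructor
      · rintro rfl
        obtain ⟨c', hc', heq'⟩ := IH.1 rfl
        refine ⟨c * c', ?_, ?_⟩
        · rcases hc with rfl | rfl <;> rcases hc' with rfl | rfl <;> norm_num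
        · rw [hGW, heq, map_smul, heq', smul_smul]
      · intro hne2
        have : t.erase i ≠ s.erase i := by
          intro hEq
          apply hne2
          rw [← Finset.insert_erase himem, ← Finset.insert_erase his, hEq]
        rw [hGW, heq, map_smul, IH.2 this, smul_zero]
    · constructor
      · rintro rfl
        exact absurd himem his
      · intro _
        rw [hGW, iot_eW_not_mem his, map_zero]

def famW (m : ℕ) : {s : Finset (Fin n) // s.card = m} → ⋀[ℝ]^m (Vn n) :=
  fun s => ⟨eW s.1, by
    have h := eW_mem (n := n) s.1
    rwa [s.2] at h⟩

lemma famW_indep (m : ℕ) : LinearIndependent ℝ (famW (n := n) m) := by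
  have key : LinearIndependent ℝ
      (fun s : {s : Finset (Fin n) // s.card = m} => eW (n := n) s.1) := by
    rw [Fintype.linearIndependent_iff]
    intro g hg t
    have h2 := congrArg (GW t.1) hg
    rw [map_sum, map_zero] at h2
    obtain ⟨c, hc, hct⟩ := (GW_eW (t := t.1) (s := t.1) rfl).1 rfl
    have h3 : ∑ s : {s : Finset (Fin n) // s.card = m}, GW t.1 (g s • eW s.1)
        = (g t * c) • (1 : ExteriorAlgebra ℝ (Vn n)) := by
      rw [Finset.sum_eq_single t]
      · rw [map_smul, hct, smul_smul]
      · intro s _ hst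
        have hcard : t.1.card = s.1.card := by rw [t.2, s.2]
        have hne : t.1 ≠ s.1 := fun h => hst (Subtype.ext h.symm)
        rw [map_smul, (GW_eW hcard).2 hne, smul_zero]
      · intro h
        exact absurd (Finset.mem_univ t) h
    rw [h3, smul_eq_zero] at h2
    rcases h2 with h2 | h2
    · rcases hc with rfl | rfl <;> [exact (mul_eq_zero.mp h2).resolve_right one_ne_zero;
        simpa using (mul_eq_zero.mp h2).resolve_right (by norm_num)]
    · exact absurd h2 one_ne_zero
  exact LinearIndependent.of_comp (⋀[ℝ]^m (Vn n)).subtype key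

lemma famW_span (m : ℕ) : ⊤ ≤ Submodule.span ℝ (Set.range (famW (n := n) m)) := by
  intro x _
  have hx : (x : ExteriorAlgebra ℝ (Vn n)) ∈ Submodule.span ℝ
      (eW '' {t : Finset (Fin n) | t.card = m}) := exteriorPower_le_span m x.2
  have himg : eW '' {t : Finset (Fin n) | t.card = m} =
      (⋀[ℝ]^m (Vn n)).subtype '' Set.range (famW m) := by
    ext y
    constructor
    · rintro ⟨t, ht, rfl⟩
      exact ⟨famW m ⟨t, ht⟩, ⟨⟨t, ht⟩, rfl⟩, rfl⟩
    · rintro ⟨_, ⟨s, rfl⟩, rfl⟩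
      exact ⟨s.1, s.2, rfl⟩
  rw [himg, ← Submodule.map_span] at hx
  obtain ⟨y, hy, hyx⟩ := hx
  rwa [show y = x from Subtype.ext hyx] at hy

def basisW (m : ℕ) : Module.Basis {s : Finset (Fin n) // s.card = m} ℝ (⋀[ℝ]^m (Vn n)) :=
  Module.Basis.mk (famW_indep m) (famW_span m)

instance (m : ℕ) : FiniteDimensional ℝ (⋀[ℝ]^m (Vn n)) :=
  Module.Basis.finiteDimensional_of_finite (basisW m)

lemma finrank_exteriorPower (m : ℕ) :
    Module.finrank ℝ (⋀[ℝ]^m (Vn n)) = n.choose m := by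
  rw [Module.finrank_eq_card_basis (basisW m), Fintype.card_finset_len, Fintype.card_fin]

instance (m : ℕ) : Module.Free ℝ (⋀[ℝ]^m (Vn n)) :=
  Module.Free.of_basis (basisW m)

lemma comp_eq_zero' (ξ η : Vn n) :
    (iotR η 0) ∘ₗ (epsR ξ 0) = (⟪ξ, η⟫ : ℝ) • (LinearMap.id : ⋀[ℝ]^0 (Vn n) →ₗ[ℝ] _) := by
  refine LinearMap.ext fun x => Subtype.ext ?_
  show iot η (eps ξ x.1) = ⟪ξ, η⟫ • x.1
  rw [eps, LinearMap.mulLeft_apply, iot_ι_mul, iot_zero_mem η x.1 x.2, mul_zero, sub_zero,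
    real_inner_comm]

lemma comp_eq_succ' (k : ℕ) (ξ η : Vn n) :
    (iotR η (k+1)) ∘ₗ (epsR ξ (k+1)) =
      (⟪ξ, η⟫ : ℝ) • (LinearMap.id : ⋀[ℝ]^(k+1) (Vn n) →ₗ[ℝ] _)
        - (epsR ξ k) ∘ₗ (iotR η k) := by
  refine LinearMap.ext fun x => Subtype.ext ?_
  show iot η (eps ξ x.1) = ⟪ξ, η⟫ • x.1 - eps ξ (iot η x.1)
  rw [eps, LinearMap.mulLeft_apply, iot_ι_mul, real_inner_comm]
  rfl

lemma Asum (n k : ℕ) :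
    (∑ j ∈ Finset.range (k + 1 + 1), (-1 : ℝ) ^ j * (n.choose (k + 1 - j)))
      = (n.choose (k+1) : ℝ) - ∑ j ∈ Finset.range (k + 1), (-1 : ℝ) ^ j * (n.choose (k - j)) := by
  rw [Finset.sum_range_succ']
  have h : ∀ i, (-1:ℝ) ^ (i+1) * (n.choose (k + 1 - (i+1)))
      = -((-1:ℝ) ^ i * (n.choose (k - i))) := by
    intro i
    rw [Nat.succ_sub_succ, pow_succ]
    ring
  rw [Finset.sum_congr rfl fun i _ => h i, Finset.sum_neg_distrib]
  simp only [pow_zero, Nat.sub_zero, one_mul]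
  ring


/-- the trace of `ι(η)ε(ξ)` on `Λᵐ` is `A_{n,m}⟨ξ,η⟩` where
`A_{n,m} = C(n,m) − C(n,m−1) + ⋯ + (−1)ᵐ C(n,0)`. -/
theorem statement2 {n : ℕ} (m : ℕ) (ξ η : Vn n) :
    LinearMap.trace ℝ (⋀[ℝ]^m (Vn n)) ((iotR η m) ∘ₗ (epsR ξ m))
      = (∑ j ∈ Finset.range (m + 1), (-1 : ℝ) ^ j * (n.choose (m - j))) * ⟪ξ, η⟫ := by
  induction m with
  | zero =>
    rw [comp_eq_zero', map_smul, LinearMap.trace_id, finrank_exteriorPower]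
    simp
  | succ k ih =>
    rw [comp_eq_succ']
    have h2 := map_sub (LinearMap.trace ℝ (⋀[ℝ]^(k+1) (Vn n)))
      ((⟪ξ, η⟫ : ℝ) • (LinearMap.id : ⋀[ℝ]^(k+1) (Vn n) →ₗ[ℝ] _))
      ((epsR ξ k) ∘ₗ (iotR η k))
    rw [h2, map_smul, LinearMap.trace_id, finrank_exteriorPower,
      LinearMap.trace_comp_comm', ih, Asum, smul_eq_mul]
    ring
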